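/- Let Φ: G → H be a right-resolving graph homomorphism between finite graphs. Then Φ is synchronizing (i.e., each fiber (∂Φ)⁻¹(I) is a single ∼_Φ class) if and only if for every state I of H there exists a path u in H starting at I such that the set (∂Φ)⁻¹(I)·u has exactly one element. -/

import Mathlib

/-- A finite directed multigraph. -/
structure FinGraph where
  V : Type
  E : Type
  [fintV : Fintype V]
  [fintE : Fintype E]
  [decV : DecidableEq V]
  [decE : DecidableEq E]
  src : E → V
  tgt : E → V

attribute [instance] FinGraph.fintV FinGraph.fintE FinGraph.decV FinGraph.decE

/-- A graph homomorphism. -/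
structure GHom (G H : FinGraph) where
  eMap : G.E → H.E
  vMap : G.V → H.V
  src_eq : ∀ e, H.src (eMap e) = vMap (G.src e)
  tgt_eq : ∀ e, H.tgt (eMap e) = vMap (G.tgt e)

def GHom.comp {G K H : FinGraph} (Δ : GHom K H) (Ψ : GHom G K) : GHom G H where
  eMap := Δ.eMap ∘ Ψ.eMap
  vMap := Δ.vMap ∘ Ψ.vMap
  src_eq := fun e => by
    simp only [Function.comp_apply, Δ.src_eq, Ψ.src_eq]
  tgt_eq := fun e => by
    simp only [Function.comp_apply, Δ.tgt_eq, Ψ.tgt_eq]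

/-- The restriction of a homomorphism to the outgoing edges of a state. -/
def outMap {G H : FinGraph} (Φ : GHom G H) (I : G.V) :
    {e : G.E // G.src e = I} → {f : H.E // H.src f = Φ.vMap I} :=
  fun e => ⟨Φ.eMap e.1, (Φ.src_eq e.1).trans (congrArg Φ.vMap e.2)⟩

/-- A right-resolver: a surjective homomorphism restricting to a bijection
on the outgoing edges of each state. -/
def IsRR {G H : FinGraph} (Φ : GHom G H) : Prop :=
  Function.Surjective Φ.vMap ∧ ∀ I : G.V, Function.Bijective (outMap Φ I)

/-- `IsPathFrom H I u`: the edge list `u` is a path in `H` starting at `I`. -/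
def IsPathFrom (H : FinGraph) : H.V → List H.E → Prop
  | _, [] => True
  | I, e :: u => H.src e = I ∧ IsPathFrom H (H.tgt e) u

/-- The terminal state of a path starting at `I`. -/
def pathEnd (H : FinGraph) (I : H.V) (u : List H.E) : H.V :=
  u.foldl (fun _ e => H.tgt e) I

/-- One-step transition: `I · a` is the target of the unique edge at `I`
lifting `a` (when `Φ` is right-resolving and `a` starts at the image of `I`). -/
noncomputable def step {G H : FinGraph} (Φ : GHom G H) (I : G.V) (a : H.E) : G.V :=
  if h : ∃ e : G.E, G.src e = I ∧ Φ.eMap e = a then G.tgt h.choose else I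

/-- Transition along a word: `I · u`. -/
noncomputable def transPath {G H : FinGraph} (Φ : GHom G H) (I : G.V) (u : List H.E) : G.V :=
  u.foldl (step Φ) I

/-- The stability relation of a right-resolver. -/
def Stable {G H : FinGraph} (Φ : GHom G H) (I₁ I₂ : G.V) : Prop :=
  Φ.vMap I₁ = Φ.vMap I₂ ∧
  ∀ u : List H.E, IsPathFrom H (Φ.vMap I₁) u →
    ∃ v : List H.E, IsPathFrom H (pathEnd H (Φ.vMap I₁) u) v ∧
      transPath Φ I₁ (u ++ v) = transPath Φ I₂ (u ++ v)

/-- A right-resolver is synchronizing if each fiber of its state map is a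
single stability class. -/
def Synchronizing {G H : FinGraph} (Φ : GHom G H) : Prop :=
  ∀ I₁ I₂ : G.V, Φ.vMap I₁ = Φ.vMap I₂ → Stable Φ I₁ I₂

/-- The fiber of the state map over a state of the codomain. -/
def fiber {G H : FinGraph} (Φ : GHom G H) (I : H.V) : Set G.V := {J | Φ.vMap J = I}

/-- The image `U · u` of a set of states under transition along a word. -/
noncomputable def setTrans {G H : FinGraph} (Φ : GHom G H) (U : Set G.V)
    (u : List H.E) : Set G.V :=
  (fun J => transPath Φ J u) '' U

/-- A minimal image of a right-resolver. -/
def IsMinImage {G H : FinGraph} (Φ : GHom G H) (U : Set G.V) : Prop :=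
  ∃ (I : H.V) (u : List H.E), IsPathFrom H I u ∧ U = setTrans Φ (fiber Φ I) u ∧
    ∀ v : List H.E, IsPathFrom H (pathEnd H I u) v →
      (setTrans Φ U v).ncard = U.ncard

/-- Strong connectedness: a directed path between every ordered pair of states. -/
def StronglyConnected (G : FinGraph) : Prop :=
  ∀ I J : G.V, ∃ u : List G.E, IsPathFrom G I u ∧ pathEnd G I u = J

section Aux

variable {G H : FinGraph} (Φ : GHom G H)

lemma transPath_append (J : G.V) (u v : List H.E) :
    transPath Φ J (u ++ v) = transPath Φ (transPath Φ J u) v := by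
  simp [transPath, List.foldl_append]

lemma pathEnd_append (I : H.V) (u v : List H.E) :
    pathEnd H I (u ++ v) = pathEnd H (pathEnd H I u) v := by
  simp [pathEnd, List.foldl_append]

lemma isPathFrom_append {I : H.V} {u v : List H.E}
    (hu : IsPathFrom H I u) (hv : IsPathFrom H (pathEnd H I u) v) :
    IsPathFrom H I (u ++ v) := by
  induction u generalizing I with
  | nil => simpa [pathEnd] using hv
  | cons e u ih =>
    obtain ⟨h1, h2⟩ := hu
    exact ⟨h1, ih h2 (by simpa [pathEnd] using hv)⟩

lemma step_vMap (hΦ : IsRR Φ) {J : G.V} {a : H.E} (h : H.src a = Φ.vMap J) :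
    Φ.vMap (step Φ J a) = H.tgt a := by
  obtain ⟨e, he⟩ := (hΦ.2 J).2 ⟨a, h⟩
  have hex : ∃ e : G.E, G.src e = J ∧ Φ.eMap e = a :=
    ⟨e.1, e.2, congrArg Subtype.val he⟩
  have h1 : G.src hex.choose = J ∧ Φ.eMap hex.choose = a := hex.choose_spec
  rw [step, dif_pos hex, ← Φ.tgt_eq, h1.2]

lemma transPath_vMap (hΦ : IsRR Φ) {J : G.V} {u : List H.E}
    (hu : IsPathFrom H (Φ.vMap J) u) :
    Φ.vMap (transPath Φ J u) = pathEnd H (Φ.vMap J) u := by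
  induction u generalizing J with
  | nil => rfl
  | cons a u ih =>
    obtain ⟨h1, h2⟩ := hu
    have hs := step_vMap Φ hΦ (J := J) (a := a) h1
    have := ih (J := step Φ J a) (by rwa [hs])
    simpa [transPath, pathEnd, hs] using this

lemma collapse_list (hΦ : IsRR Φ) (hsync : Synchronizing Φ) (I : H.V)
    (L : List G.V) (hL : ∀ J ∈ L, Φ.vMap J = I) :
    ∃ u : List H.E, IsPathFrom H I u ∧
      ∀ J ∈ L, ∀ J' ∈ L, transPath Φ J u = transPath Φ J' u := by
  induction L with
  | nil => exact ⟨[], trivial, by simp⟩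
  | cons J L' ih =>
    obtain ⟨u, hu, heq⟩ := ih (fun J' hJ' => hL J' (List.mem_cons_of_mem _ hJ'))
    match L', heq with
    | [], _ =>
      exact ⟨u, hu, by simp⟩
    | J₀ :: L'', heq =>
      have hJ : Φ.vMap J = I := hL J List.mem_cons_self
      have hJ₀ : Φ.vMap J₀ = I := hL J₀ (by simp)
      have hst := hsync J J₀ (hJ.trans hJ₀.symm)
      obtain ⟨v, hv, hJv⟩ := hst.2 u (by rwa [hJ])
      refine ⟨u ++ v, isPathFrom_append hu (by rwa [hJ] at hv), ?_⟩
      have key : ∀ K ∈ J :: J₀ :: L'',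
          transPath Φ K (u ++ v) = transPath Φ J₀ (u ++ v) := by
        intro K hK
        rcases List.mem_cons.1 hK with rfl | hK
        · exact hJv
        · rw [transPath_append, heq K hK J₀ (by simp), ← transPath_append]
      intro K hK K' hK'
      rw [key K hK, key K' hK']

end Aux

/-- a right-resolver is synchronizing iff every fiber can be
collapsed to a single state by some word. -/
theorem synchronizing_iff_collapsible {G H : FinGraph} (Φ : GHom G H) (hΦ : IsRR Φ) :
    Synchronizing Φ ↔
      ∀ I : H.V, ∃ u : List H.E, IsPathFrom H I u ∧
        (setTrans Φ (fiber Φ I) u).ncard = 1 := by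
  constructor
  · intro hsync I
    set L := (Finset.univ.filter (fun J : G.V => Φ.vMap J = I)).toList with hLdef
    have hLmem : ∀ J : G.V, J ∈ L ↔ Φ.vMap J = I := by
      intro J; simp [hLdef]
    obtain ⟨u, hu, heq⟩ := collapse_list Φ hΦ hsync I L (fun J hJ => (hLmem J).1 hJ)
    obtain ⟨J₀, hJ₀⟩ := hΦ.1 I
    refine ⟨u, hu, ?_⟩
    rw [Set.ncard_eq_one]
    refine ⟨transPath Φ J₀ u, ?_⟩
    ext x
    simp only [setTrans, Set.mem_image, Set.mem_singleton_iff]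
    constructor
    · rintro ⟨J, hJ, rfl⟩
      exact heq J ((hLmem J).2 hJ) J₀ ((hLmem J₀).2 hJ₀)
    · rintro rfl
      exact ⟨J₀, hJ₀, rfl⟩
  · intro h I₁ I₂ hv
    refine ⟨hv, ?_⟩
    intro u hu
    obtain ⟨w, hw, hcard⟩ := h (pathEnd H (Φ.vMap I₁) u)
    obtain ⟨c, hc⟩ := Set.ncard_eq_one.1 hcard
    refine ⟨w, hw, ?_⟩
    have h1 : Φ.vMap (transPath Φ I₁ u) = pathEnd H (Φ.vMap I₁) u :=
      transPath_vMap Φ hΦ hu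
    have h2 : Φ.vMap (transPath Φ I₂ u) = pathEnd H (Φ.vMap I₁) u := by
      have h2x := transPath_vMap Φ hΦ (J := I₂) (u := u) (by rwa [← hv])
      rw [hv]; exact h2x
    have m1 : transPath Φ (transPath Φ I₁ u) w ∈
        setTrans Φ (fiber Φ (pathEnd H (Φ.vMap I₁) u)) w :=
      ⟨transPath Φ I₁ u, h1, rfl⟩
    have m2 : transPath Φ (transPath Φ I₂ u) w ∈
        setTrans Φ (fiber Φ (pathEnd H (Φ.vMap I₁) u)) w :=
      ⟨transPath Φ I₂ u, h2, rfl⟩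
    rw [hc] at m1 m2
    rw [transPath_append, transPath_append, m1, m2]
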